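/- Let g(x) = φ(x)/Φ(x). Then for every x ≥ 0, the derivative g'(x) = −(e^{−x²/2}/(2π)) · ( x√(2π)·Φ(x) + e^{−x²/2} ) / Φ(x)² satisfies both bounds |g'(x)| ≤ (2/π)·(1 + x√(2π)) and |g'(x)| ≤ 2/π + √(2/π)·x·e^{−x²/2}. -/

import Mathlib

open MeasureTheory Real

/-- The standard normal density `φ(x) = (2π)^{-1/2} exp(−x²/2)`. -/
noncomputable def stdNormalPDF (x : ℝ) : ℝ :=
  (Real.sqrt (2 * Real.pi))⁻¹ * Real.exp (-x ^ 2 / 2)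

/-- The standard normal distribution function `Φ(x) = ∫_{−∞}^x φ(u) du`. -/
noncomputable def stdNormalCDF (x : ℝ) : ℝ :=
  ∫ u in Set.Iic x, stdNormalPDF u

section Aux
open Set

lemma pdf_cont : Continuous stdNormalPDF := by
  unfold stdNormalPDF; fun_prop

lemma pdf_nonneg (x : ℝ) : 0 ≤ stdNormalPDF x := by
  unfold stdNormalPDF; positivity

lemma pdf_integrable : Integrable stdNormalPDF := by
  have h := (integrable_exp_neg_mul_sq (by norm_num : (0:ℝ) < 1/2)).const_mul
    (Real.sqrt (2 * Real.pi))⁻¹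
  refine h.congr ?_
  filter_upwards with x
  unfold stdNormalPDF
  ring_nf

lemma pdf_total : ∫ x, stdNormalPDF x = 1 := by
  unfold stdNormalPDF
  rw [integral_const_mul]
  have : ∀ x : ℝ, Real.exp (-x ^ 2 / 2) = Real.exp (-(1/2) * x ^ 2) := by
    intro x; ring_nf
  simp_rw [this, integral_gaussian]
  rw [show π / (1/2) = 2 * π by ring]
  rw [inv_mul_cancel₀ (by positivity)]

lemma cdf_zero : stdNormalCDF 0 = 1/2 := by
  have heven : (∫ x in Iic (0:ℝ), stdNormalPDF x) = ∫ x in Ioi (0:ℝ), stdNormalPDF x := by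
    rw [show Ioi (0:ℝ) = Ioi (-0) by norm_num, ← integral_comp_neg_Iic]
    apply setIntegral_congr_fun measurableSet_Iic
    intro y _
    unfold stdNormalPDF
    simp [neg_sq]
  have hsum := intervalIntegral.integral_Iic_add_Ioi (b := (0:ℝ)) pdf_integrable.integrableOn
    pdf_integrable.integrableOn
  rw [pdf_total] at hsum
  unfold stdNormalCDF
  linarith [heven, hsum]

lemma cdf_hasDerivAt (x : ℝ) : HasDerivAt stdNormalCDF (stdNormalPDF x) x := by
  have key : ∀ y, stdNormalCDF y = stdNormalCDF 0 + ∫ t in (0:ℝ)..y, stdNormalPDF t := by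
    intro y
    rw [← intervalIntegral.integral_Iic_sub_Iic pdf_integrable.integrableOn
      pdf_integrable.integrableOn]
    unfold stdNormalCDF; ring
  rw [show stdNormalCDF = fun y => stdNormalCDF 0 + ∫ t in (0:ℝ)..y, stdNormalPDF t
    from funext key]
  exact (intervalIntegral.integral_hasDerivAt_right
    (pdf_integrable.intervalIntegrable)
    pdf_cont.aestronglyMeasurable.stronglyMeasurableAtFilter
    pdf_cont.continuousAt).const_add _

lemma cdf_ge_half {x : ℝ} (hx : 0 ≤ x) : 1/2 ≤ stdNormalCDF x := by
  have h := intervalIntegral.integral_Iic_sub_Iic (a := (0:ℝ)) (b := x)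
    pdf_integrable.integrableOn pdf_integrable.integrableOn
  have hnn : 0 ≤ ∫ t in (0:ℝ)..x, stdNormalPDF t :=
    intervalIntegral.integral_nonneg hx (fun u _ => pdf_nonneg u)
  have h0 := cdf_zero
  unfold stdNormalCDF at *
  linarith

lemma pdf_hasDerivAt (x : ℝ) :
    HasDerivAt stdNormalPDF ((Real.sqrt (2*π))⁻¹ * (Real.exp (-x^2/2) * (-x))) x := by
  have h1 : HasDerivAt (fun y : ℝ => -y^2/2) (-x) x := by
    have := ((hasDerivAt_pow 2 x).neg).div_const 2
    norm_num at this
    refine this.congr_deriv ?_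
    ring
  exact (h1.exp).const_mul _


end Aux

/-- For `g = φ/Φ` and `x ≥ 0`, the derivative
`g'(x) = −(e^{−x²/2}/(2π))·(x√(2π)·Φ(x) + e^{−x²/2})/Φ(x)²` satisfies both bounds
`|g'(x)| ≤ (2/π)(1 + x√(2π))` and `|g'(x)| ≤ 2/π + √(2/π)·x·e^{−x²/2}`. -/
theorem stmt18 (x : ℝ) (hx : 0 ≤ x) :
    HasDerivAt (fun y => stdNormalPDF y / stdNormalCDF y)
      (-(Real.exp (-x ^ 2 / 2) / (2 * Real.pi)) *
        ((x * Real.sqrt (2 * Real.pi) * stdNormalCDF x + Real.exp (-x ^ 2 / 2)) /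
          stdNormalCDF x ^ 2)) x ∧
    |(-(Real.exp (-x ^ 2 / 2) / (2 * Real.pi)) *
        ((x * Real.sqrt (2 * Real.pi) * stdNormalCDF x + Real.exp (-x ^ 2 / 2)) /
          stdNormalCDF x ^ 2))|
      ≤ 2 / Real.pi * (1 + x * Real.sqrt (2 * Real.pi)) ∧
    |(-(Real.exp (-x ^ 2 / 2) / (2 * Real.pi)) *
        ((x * Real.sqrt (2 * Real.pi) * stdNormalCDF x + Real.exp (-x ^ 2 / 2)) /
          stdNormalCDF x ^ 2))|
      ≤ 2 / Real.pi + Real.sqrt (2 / Real.pi) * x * Real.exp (-x ^ 2 / 2) := by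
  have hpi : (0:ℝ) < π := Real.pi_pos
  have hc0 : 0 < Real.sqrt (2*π) := Real.sqrt_pos.mpr (by positivity)
  have hc2 : Real.sqrt (2*π)^2 = 2*π := Real.sq_sqrt (by positivity)
  have hΦh : 1/2 ≤ stdNormalCDF x := cdf_ge_half hx
  have hΦ0 : 0 < stdNormalCDF x := by linarith
  have hE0 : 0 < Real.exp (-x^2/2) := Real.exp_pos _
  have hE1 : Real.exp (-x^2/2) ≤ 1 := Real.exp_le_one_iff.mpr (by nlinarith [sq_nonneg x])
  set c := Real.sqrt (2*π) with hc
  set E := Real.exp (-x^2/2) with hE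
  set Φ := stdNormalCDF x with hΦ
  have hderiv : HasDerivAt (fun y => stdNormalPDF y / stdNormalCDF y)
      (-(E / (2*π)) * ((x * c * Φ + E) / Φ^2)) x := by
    have h := (pdf_hasDerivAt x).div (cdf_hasDerivAt x) (ne_of_gt hΦ0)
    rw [← hc, ← hE, ← hΦ] at h
    refine h.congr_deriv ?_
    rw [show stdNormalPDF x = c⁻¹ * E from rfl, ← hc2]
    field_simp
    ring
  have habs : |(-(E / (2*π)) * ((x * c * Φ + E) / Φ^2))|
      = E * (x * c * Φ + E) / (2*π*Φ^2) := by
    rw [abs_of_nonpos, neg_mul, neg_neg]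
    · field_simp
    · apply mul_nonpos_of_nonpos_of_nonneg
      · simp only [neg_nonpos]; positivity
      · positivity
  refine ⟨hderiv, ?_, ?_⟩
  · rw [habs, div_le_iff₀ (by positivity)]
    have h4 : 2/π*(1+x*c)*(2*π*Φ^2) = 4*(1+x*c)*Φ^2 := by field_simp; ring
    rw [h4]
    nlinarith [mul_nonneg (mul_nonneg (mul_nonneg hx hc0.le) hΦ0.le)
        (by linarith : (0:ℝ) ≤ 1 - E),
      mul_nonneg (mul_nonneg (mul_nonneg hx hc0.le) hΦ0.le)
        (by linarith : (0:ℝ) ≤ 4*Φ - 1),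
      mul_nonneg (by linarith : (0:ℝ) ≤ 2*Φ - E) (by linarith : (0:ℝ) ≤ 2*Φ + E)]
  · have hsqrt : Real.sqrt (2/π) = c / π := by
      rw [hc, show (2:ℝ)/π = (2*π)/π^2 by field_simp, Real.sqrt_div (by positivity),
        Real.sqrt_sq hpi.le]
    rw [habs, hsqrt, div_le_iff₀ (by positivity)]
    have h5 : (2/π + c/π*x*E)*(2*π*Φ^2) = 4*Φ^2 + 2*c*x*E*Φ^2 := by field_simp; ring
    rw [h5]
    nlinarith [mul_nonneg (mul_nonneg (mul_nonneg (mul_nonneg hx hc0.le) hΦ0.le) hE0.le)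
        (by linarith : (0:ℝ) ≤ 2*Φ - 1),
      mul_nonneg (by linarith : (0:ℝ) ≤ 2*Φ - E) (by linarith : (0:ℝ) ≤ 2*Φ + E)]
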